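/- Let n be a positive integer, let A, B, X be n×n complex matrices with X invertible, and let α ∈ ℝ. Then |Tr(A B* |X|)|² ≤ Tr(|A*|² · |X|^(2α)) · Tr(|B*|² · |X|^(2(1−α))), where |T| = (T*T)^(1/2), B* denotes the conjugate transpose, and real powers of the positive definite matrix |X| are defined via the functional calculus. -/

import Mathlib

open scoped ComplexOrder Matrix

/-- The absolute value `|X| = (X*X)^(1/2)` of a square complex matrix. -/
noncomputable def matrixAbs {n : ℕ} (X : Matrix (Fin n) (Fin n) ℂ) :
    Matrix (Fin n) (Fin n) ℂ :=
  (Matrix.posSemidef_conjTranspose_mul_self X).1.eigenvectorUnitary.1 *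
    Matrix.diagonal ((↑) ∘ (√·) ∘ (Matrix.posSemidef_conjTranspose_mul_self X).1.eigenvalues) *
    (star (Matrix.posSemidef_conjTranspose_mul_self X).1.eigenvectorUnitary : Matrix (Fin n) (Fin n) ℂ)

/-- The real power `P^r` of a (positive definite) matrix via the functional calculus. -/
noncomputable def matrixRpow {n : ℕ} (P : Matrix (Fin n) (Fin n) ℂ) (r : ℝ) :
    Matrix (Fin n) (Fin n) ℂ :=
  cfc (fun x : ℝ => x ^ r) P

open Matrix in
private lemma trace_conj_mul_eq {n : ℕ} (M N : Matrix (Fin n) (Fin n) ℂ) :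
    (Mᴴ * N).trace = ∑ p : Fin n × Fin n, (starRingEnd ℂ) (M p.1 p.2) * N p.1 p.2 := by
  rw [Fintype.sum_prod_type]
  simp only [Matrix.trace, Matrix.diag, Matrix.mul_apply, Matrix.conjTranspose_apply]
  rw [Finset.sum_comm]
  rfl

open Matrix in
private lemma trace_cauchy_schwarz {n : ℕ} (M N : Matrix (Fin n) (Fin n) ℂ) :
    (‖(Mᴴ * N).trace‖ : ℂ) ^ 2 ≤ (Mᴴ * M).trace * (Nᴴ * N).trace := by
  classical
  set v : EuclideanSpace ℂ (Fin n × Fin n) :=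
    WithLp.toLp 2 (fun p : Fin n × Fin n => M p.1 p.2) with hv
  set w : EuclideanSpace ℂ (Fin n × Fin n) :=
    WithLp.toLp 2 (fun p : Fin n × Fin n => N p.1 p.2) with hw
  have hMN : (Mᴴ * N).trace = inner (𝕜 := ℂ) v w := by
    rw [trace_conj_mul_eq, PiLp.inner_apply]
    simp [RCLike.inner_apply, hv, hw, mul_comm]
  have hMM : (Mᴴ * M).trace = ((‖v‖ : ℂ)) ^ 2 := by
    rw [trace_conj_mul_eq, show ∑ p : Fin n × Fin n, (starRingEnd ℂ) (M p.1 p.2) * M p.1 p.2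
        = inner (𝕜 := ℂ) v v from by rw [PiLp.inner_apply]; simp [RCLike.inner_apply, hv, Complex.conj_mul'],
      inner_self_eq_norm_sq_to_K]
    norm_cast
  have hNN : (Nᴴ * N).trace = ((‖w‖ : ℂ)) ^ 2 := by
    rw [trace_conj_mul_eq, show ∑ p : Fin n × Fin n, (starRingEnd ℂ) (N p.1 p.2) * N p.1 p.2
        = inner (𝕜 := ℂ) w w from by rw [PiLp.inner_apply]; simp [RCLike.inner_apply, hw, Complex.conj_mul'],
      inner_self_eq_norm_sq_to_K]
    norm_cast
  rw [hMN, hMM, hNN]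
  have h := norm_inner_le_norm (𝕜 := ℂ) v w
  have h2 : ‖inner (𝕜 := ℂ) v w‖ ^ 2 ≤ (‖v‖ * ‖w‖) ^ 2 :=
    pow_le_pow_left₀ (norm_nonneg _) h 2
  calc (‖inner (𝕜 := ℂ) v w‖ : ℂ) ^ 2
      = ((‖inner (𝕜 := ℂ) v w‖ ^ 2 : ℝ) : ℂ) := by push_cast; ring
    _ ≤ (((‖v‖ * ‖w‖) ^ 2 : ℝ) : ℂ) := by
        exact_mod_cast Complex.real_le_real.mpr h2
    _ = ((‖v‖ : ℂ)) ^ 2 * ((‖w‖ : ℂ)) ^ 2 := by push_cast; ring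

private lemma matrixAbs_eq_cfc {n : ℕ} (X : Matrix (Fin n) (Fin n) ℂ) :
    matrixAbs X = cfc Real.sqrt (Xᴴ * X) := by
  rw [(Matrix.posSemidef_conjTranspose_mul_self X).1.cfc_eq, Matrix.IsHermitian.cfc,
    Unitary.conjStarAlgAut_apply, matrixAbs]
  rfl

open scoped MatrixOrder in
private lemma matrixAbs_posSemidef {n : ℕ} (X : Matrix (Fin n) (Fin n) ℂ) :
    (matrixAbs X).PosSemidef := by
  rw [matrixAbs_eq_cfc, ← Matrix.nonneg_iff_posSemidef]
  exact cfc_nonneg fun x _ => Real.sqrt_nonneg x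

private lemma matrixAbs_mul_self {n : ℕ} (X : Matrix (Fin n) (Fin n) ℂ) :
    matrixAbs X * matrixAbs X = Xᴴ * X := by
  have hsa : IsSelfAdjoint (Xᴴ * X) := Matrix.isHermitian_conjTranspose_mul_self X
  have hnn : ∀ x ∈ spectrum ℝ (Xᴴ * X), 0 ≤ x := by
    intro x hx
    rw [(Matrix.isHermitian_conjTranspose_mul_self X).spectrum_real_eq_range_eigenvalues] at hx
    obtain ⟨i, rfl⟩ := hx
    exact (Matrix.posSemidef_conjTranspose_mul_self X).eigenvalues_nonneg i
  rw [matrixAbs_eq_cfc, ← cfc_mul Real.sqrt Real.sqrt (Xᴴ * X)]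
  conv_rhs => rw [← cfc_id' ℝ (Xᴴ * X)]
  exact cfc_congr fun x hx => Real.mul_self_sqrt (hnn x hx)

private lemma matrixAbs_posDef {n : ℕ} {X : Matrix (Fin n) (Fin n) ℂ} (hX : IsUnit X) :
    (matrixAbs X).PosDef := by
  have hXX : (Xᴴ * X).PosDef := by
    refine Matrix.PosDef.of_dotProduct_mulVec_pos
      (Matrix.isHermitian_conjTranspose_mul_self _) fun x hx => ?_
    rw [← Matrix.mulVec_mulVec, Matrix.dotProduct_mulVec, Matrix.vecMul_conjTranspose, star_star]
    refine Matrix.dotProduct_star_self_pos_iff.mpr fun h => hx ?_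
    have hinj := Matrix.mulVec_injective_iff_isUnit.mpr hX
    have : X *ᵥ x = X *ᵥ 0 := by simpa using h
    simpa using hinj this
  have hsd : (matrixAbs X).PosSemidef :=
    matrixAbs_posSemidef X
  refine Matrix.PosDef.of_dotProduct_mulVec_pos hsd.isHermitian
    fun x hx => lt_of_le_of_ne (hsd.dotProduct_mulVec_nonneg x) fun h => ?_
  have hPx : matrixAbs X *ᵥ x = 0 := (hsd.dotProduct_mulVec_zero_iff x).mp h.symm
  have hXXx : (Xᴴ * X) *ᵥ x = 0 := by
    have : matrixAbs X * matrixAbs X = Xᴴ * X :=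
      matrixAbs_mul_self X
    rw [← this, ← Matrix.mulVec_mulVec, hPx, Matrix.mulVec_zero]
  have := hXX.dotProduct_mulVec_pos hx
  rw [hXXx] at this
  simp at this

private lemma matrixRpow_mul {n : ℕ} {P : Matrix (Fin n) (Fin n) ℂ} (hP : P.PosDef)
    (r s : ℝ) : matrixRpow P r * matrixRpow P s = matrixRpow P (r + s) := by
  have hsa : IsSelfAdjoint P := hP.isHermitian
  have hspec : spectrum ℝ P ⊆ Set.Ioi 0 := by
    rw [hP.isHermitian.spectrum_real_eq_range_eigenvalues]
    rintro x ⟨i, rfl⟩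
    exact hP.eigenvalues_pos i
  have hc : ∀ t : ℝ, ContinuousOn (fun x : ℝ => x ^ t) (spectrum ℝ P) := fun t x hx =>
    (Real.continuousAt_rpow_const x t (Or.inl (hspec hx).ne')).continuousWithinAt
  rw [matrixRpow, matrixRpow, matrixRpow, ← cfc_mul _ _ P (hc r) (hc s)]
  exact cfc_congr fun x hx => (Real.rpow_add (hspec hx) r s).symm

private lemma matrixRpow_one {n : ℕ} {P : Matrix (Fin n) (Fin n) ℂ} (hP : P.PosDef) :
    matrixRpow P 1 = P := by
  have hsa : IsSelfAdjoint P := hP.isHermitian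
  rw [matrixRpow]
  calc cfc (fun x : ℝ => x ^ (1 : ℝ)) P = cfc (fun x : ℝ => x) P :=
        cfc_congr fun x _ => Real.rpow_one x
    _ = P := cfc_id' ℝ P

private lemma matrixRpow_isSelfAdjoint {n : ℕ} (P : Matrix (Fin n) (Fin n) ℂ) (r : ℝ) :
    IsSelfAdjoint (matrixRpow P r) := cfc_predicate _ P

/-- `|Tr(A B* |X|)|² ≤ Tr(|A*|² |X|^(2α)) · Tr(|B*|² |X|^(2(1−α)))` for `X` invertible
and any real `α`. -/
theorem stmt_16 (n : ℕ) (hn : 0 < n) (A B X : Matrix (Fin n) (Fin n) ℂ)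
    (hX : IsUnit X) (α : ℝ) :
    (‖(A * Bᴴ * matrixAbs X).trace‖ : ℂ) ^ 2 ≤
      ((matrixAbs Aᴴ) ^ 2 * matrixRpow (matrixAbs X) (2 * α)).trace *
        ((matrixAbs Bᴴ) ^ 2 * matrixRpow (matrixAbs X) (2 * (1 - α))).trace := by
  classical
  set P := matrixAbs X with hPdef
  have hP : P.PosDef := matrixAbs_posDef hX
  set Q := matrixRpow P α with hQdef
  set R := matrixRpow P (1 - α) with hRdef
  have hQsa : Qᴴ = Q := matrixRpow_isSelfAdjoint P α
  have hRsa : Rᴴ = R := matrixRpow_isSelfAdjoint P (1 - α)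
  have hRQ : R * Q = P := by
    rw [hRdef, hQdef, matrixRpow_mul hP, sub_add_cancel, matrixRpow_one hP]
  have hQQ : Q * Q = matrixRpow P (2 * α) := by
    rw [hQdef, matrixRpow_mul hP]; ring_nf
  have hRR : R * R = matrixRpow P (2 * (1 - α)) := by
    rw [hRdef, matrixRpow_mul hP]; ring_nf
  set M := Aᴴ * Q with hMdef
  set N := Bᴴ * R with hNdef
  have key := trace_cauchy_schwarz M N
  have hMN : (Mᴴ * N).trace = (A * Bᴴ * P).trace := by
    rw [hMdef, hNdef, Matrix.conjTranspose_mul, Matrix.conjTranspose_conjTranspose, hQsa]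
    have e1 : Q * A * (Bᴴ * R) = Q * (A * Bᴴ * R) := by
      simp only [Matrix.mul_assoc]
    rw [e1, Matrix.trace_mul_comm, Matrix.mul_assoc, hRQ]
  have hMM : (Mᴴ * M).trace = ((matrixAbs Aᴴ) ^ 2 * matrixRpow P (2 * α)).trace := by
    have habs : (matrixAbs Aᴴ) ^ 2 = A * Aᴴ := by
      rw [sq, matrixAbs_mul_self, Matrix.conjTranspose_conjTranspose]
    rw [hMdef, Matrix.conjTranspose_mul, Matrix.conjTranspose_conjTranspose, hQsa, habs]
    have e1 : Q * A * (Aᴴ * Q) = Q * (A * Aᴴ * Q) := by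
      simp only [Matrix.mul_assoc]
    rw [e1, Matrix.trace_mul_comm, Matrix.mul_assoc, hQQ]
  have hNN : (Nᴴ * N).trace = ((matrixAbs Bᴴ) ^ 2 * matrixRpow P (2 * (1 - α))).trace := by
    have habs : (matrixAbs Bᴴ) ^ 2 = B * Bᴴ := by
      rw [sq, matrixAbs_mul_self, Matrix.conjTranspose_conjTranspose]
    rw [hNdef, Matrix.conjTranspose_mul, Matrix.conjTranspose_conjTranspose, hRsa, habs]
    have e1 : R * B * (Bᴴ * R) = R * (B * Bᴴ * R) := by
      simp only [Matrix.mul_assoc]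
    rw [e1, Matrix.trace_mul_comm, Matrix.mul_assoc, hRR]
  rw [hMN, hMM, hNN] at key
  exact key
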